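/- arXiv:1204.5549 — 4 statements merged into one kernel-verified Lean document; each statement's English description precedes it below -/
import Mathlib

section
/- Let α : [0,T'] → ℝ be continuous with 0 ≤ α(t) ≤ εt for all t ∈ (0,T'], where 0 < ε < 1, and let b : [0,T'] → ℝ be continuous with sup_t |b(t)| · ε^{N} ≤ q < 1 for some N ∈ ℕ. Then the composition operator (Mv)(t) = b(t)·(α(t)/t)^{N}·v(α(t)) (with (α(t)/t)^N interpreted as its limit at t=0) is a bounded linear operator on C[0,T'] with the weighted norm ‖v‖_l = sup_t e^{−lt}|v(t)|, and ‖M‖ ≤ q < 1 for every l ≥ 0. -/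
/-- The composition operator (Mv)(t) = b(t)(α(t)/t)^N v(α(t)) with 0 ≤ α(t) ≤ εt,
0 < ε < 1, and sup|b|·ε^N ≤ q < 1 satisfies, in the Bielecki norm
‖v‖_l = sup e^{−lt}|v(t)| for every l ≥ 0, the bound ‖Mv‖_l ≤ q‖v‖_l. -/
theorem composition_operator_bielecki_bound
    (T' ε q : ℝ) (hT' : 0 < T') (hε0 : 0 < ε) (hε1 : ε < 1) (hq : q < 1)
    (N : ℕ) (α b : ℝ → ℝ)
    (hαc : ContinuousOn α (Set.Icc 0 T')) (hbc : ContinuousOn b (Set.Icc 0 T'))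
    (hα : ∀ t ∈ Set.Ioc 0 T', 0 ≤ α t ∧ α t ≤ ε * t)
    (hb : ∀ t ∈ Set.Icc 0 T', |b t| * ε ^ N ≤ q)
    (l : ℝ) (hl : 0 ≤ l)
    (v : ℝ → ℝ) (hv : ContinuousOn v (Set.Icc 0 T'))
    (M : ℝ) (hM : ∀ t ∈ Set.Icc 0 T', Real.exp (-l * t) * |v t| ≤ M) :
    ∀ t ∈ Set.Ioc 0 T',
      Real.exp (-l * t) * |b t * (α t / t) ^ N * v (α t)| ≤ q * M := by
  intro t ht
  obtain ⟨ht0, htT⟩ := ht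
  obtain ⟨hα0, hαε⟩ := hα t ⟨ht0, htT⟩
  have hαt : α t ≤ t := le_trans hαε (by nlinarith)
  have hαT : α t ∈ Set.Icc (0:ℝ) T' := ⟨hα0, le_trans hαt htT⟩
  have hbt := hb t ⟨ht0.le, htT⟩
  have hM' := hM (α t) hαT
  have hr0 : 0 ≤ α t / t := div_nonneg hα0 ht0.le
  have hrε : α t / t ≤ ε := (div_le_iff₀ ht0).mpr (by linarith [hαε])
  have he : Real.exp (-l * t) ≤ Real.exp (-l * α t) :=
    Real.exp_le_exp.mpr (by nlinarith)
  have hq0 : (0:ℝ) ≤ q := le_trans (by positivity) hbt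
  have habs : |b t * (α t / t) ^ N * v (α t)|
      = |b t| * (α t / t) ^ N * |v (α t)| := by
    rw [abs_mul, abs_mul, abs_pow, abs_of_nonneg hr0]
  rw [habs]
  calc Real.exp (-l * t) * (|b t| * (α t / t) ^ N * |v (α t)|)
      = |b t| * (α t / t) ^ N * (Real.exp (-l * t) * |v (α t)|) := by ring
    _ ≤ |b t| * ε ^ N * (Real.exp (-l * α t) * |v (α t)|) := by
        apply mul_le_mul
        · exact mul_le_mul_of_nonneg_left (pow_le_pow_left₀ hr0 hrε N) (abs_nonneg _)
        · exact mul_le_mul_of_nonneg_right he (abs_nonneg _)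
        · positivity
        · positivity
    _ ≤ q * M := mul_le_mul hbt hM' (by positivity) hq0
end

section
/- For every constant c ∈ ℝ, the function x(t) = δ(t) + c − (ln t)/(ln 2) satisfies the Volterra equation ∫₀^{t/2} x(s) ds − ∫_{t/2}^{t} x(s) ds = 1 + t for all t > 0; equivalently, the regular part g(t) = c − (ln t)/(ln 2) satisfies ∫₀^{t/2} g(s) ds − ∫_{t/2}^{t} g(s) ds = t for all t > 0, and the delta contributes ∫₀^{t/2} δ = 1, ∫_{t/2}^t δ = 0. -/
open MeasureTheory intervalIntegral

lemma log_intervalIntegrable {a : ℝ} (ha : 0 < a) :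
    IntervalIntegrable Real.log volume 0 a := by
  have hg : IntervalIntegrable (fun x : ℝ => 2 * x ^ (-(1/2) : ℝ) + |Real.log a|)
      volume 0 a := by
    apply IntervalIntegrable.add
    · exact (intervalIntegral.intervalIntegrable_rpow' (by norm_num)).const_mul 2
    · exact intervalIntegrable_const
  refine hg.mono_fun Real.measurable_log.aestronglyMeasurable ?_
  filter_upwards [ae_restrict_mem measurableSet_uIoc] with x hx
  rw [Set.uIoc_of_le ha.le] at hx
  obtain ⟨hx0, hxa⟩ := hx
  have hpow : (0:ℝ) ≤ 2 * x ^ (-(1/2) : ℝ) := by positivity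
  rw [Real.norm_eq_abs, Real.norm_eq_abs, abs_of_nonneg (by positivity :
    (0:ℝ) ≤ 2 * x ^ (-(1/2) : ℝ) + |Real.log a|)]
  rcases le_or_gt x 1 with h1 | h1
  · have hlog : Real.log x ≤ 0 := Real.log_nonpos hx0.le h1
    rw [abs_of_nonpos hlog]
    have : -Real.log x = Real.log x⁻¹ := (Real.log_inv x).symm
    rw [this]
    have := Real.log_le_rpow_div (x := x⁻¹) (by positivity) (by norm_num : (0:ℝ) < 1/2)
    calc Real.log x⁻¹ ≤ (x⁻¹) ^ ((1:ℝ)/2) / (1/2) := this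
      _ = 2 * x ^ (-(1/2) : ℝ) := by
          rw [show x⁻¹ = x ^ (-1 : ℝ) from (Real.rpow_neg_one x).symm,
            ← Real.rpow_mul hx0.le]
          norm_num
          ring
      _ ≤ 2 * x ^ (-(1/2) : ℝ) + |Real.log a| := le_add_of_nonneg_right (abs_nonneg _)
  · have hlog : 0 ≤ Real.log x := Real.log_nonneg h1.le
    rw [abs_of_nonneg hlog]
    have : Real.log x ≤ Real.log a := Real.log_le_log hx0 hxa
    calc Real.log x ≤ |Real.log a| := this.trans (le_abs_self _)
      _ ≤ 2 * x ^ (-(1/2) : ℝ) + |Real.log a| := le_add_of_nonneg_left hpow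

lemma integral_log_from_zero' {a : ℝ} (ha : 0 < a) :
    ∫ s in (0:ℝ)..a, Real.log s = a * Real.log a - a := by
  have h := intervalIntegral.integral_eq_sub_of_hasDeriv_right_of_le (f := fun x => x * Real.log x - x)
      (f' := Real.log) ha.le ?_ ?_ (log_intervalIntegrable ha)
  · simpa using h
  · exact ((Real.continuous_mul_log.sub continuous_id).continuousOn)
  · intro x hx
    have hx0 : x ≠ 0 := ne_of_gt hx.1
    have : HasDerivAt (fun x : ℝ => x * Real.log x - x) (Real.log x) x := by
      have h1 : HasDerivAt (fun x : ℝ => x * Real.log x) (Real.log x + 1) x := by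
        have := (hasDerivAt_id x).mul (Real.hasDerivAt_log hx0)
        exact this.congr_deriv (by simp only [id, one_mul, mul_inv_cancel₀ hx0])
      exact (h1.sub (hasDerivAt_id x)).congr_deriv (by ring)
    exact this.hasDerivWithinAt

/-- For every c ∈ ℝ, x(t) = δ(t) + c − ln t/ln 2 solves
∫₀^{t/2} x − ∫_{t/2}^t x = 1 + t for t > 0: with the delta contributing
∫₀^{t/2} δ = 1 and ∫_{t/2}^t δ = 0, and the regular part g(t) = c − ln t/ln 2
satisfying ∫₀^{t/2} g − ∫_{t/2}^t g = t. -/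
theorem example_two_solution (c : ℝ) :
    ∀ t : ℝ, 0 < t →
      ((1 : ℝ) + ∫ s in (0:ℝ)..(t / 2), (c - Real.log s / Real.log 2)) -
        ((0 : ℝ) + ∫ s in (t / 2)..t, (c - Real.log s / Real.log 2)) = 1 + t := by
  intro t ht
  have ht2 : 0 < t / 2 := by linarith
  have hil1 : IntervalIntegrable Real.log volume 0 (t/2) := log_intervalIntegrable ht2
  have hil2 : IntervalIntegrable Real.log volume (t/2) t :=
    (log_intervalIntegrable ht).mono_set (by
      rw [Set.uIcc_of_le (by linarith), Set.uIcc_of_le ht.le]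
      exact Set.Icc_subset_Icc (by linarith) le_rfl)
  have key : ∀ (a b : ℝ), IntervalIntegrable Real.log volume a b →
      (∫ s in a..b, (c - Real.log s / Real.log 2)) =
        c * (b - a) - (∫ s in a..b, Real.log s) / Real.log 2 := by
    intro a b hab
    rw [intervalIntegral.integral_sub intervalIntegrable_const (hab.div_const _)]
    simp [intervalIntegral.integral_div, mul_comm]
  rw [key _ _ hil1, key _ _ hil2, integral_log_from_zero' ht2,
    integral_log,
    Real.log_div (ne_of_gt ht) (by norm_num)]
  have h2 : Real.log 2 ≠ 0 := by
    exact ne_of_gt (Real.log_pos (by norm_num))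
  field_simp
  ring
end

section
/- Consider the difference equation K_n x(z) + Σ_{i=1}^{n−1} a_i (K_i − K_{i+1}) x(z + ln a_i) = f₀, where a_i ∈ (0,1), K_i ∈ ℝ, and f₀ ∈ ℝ, and let B(j) = K_n + Σ_{i=1}^{n−1} a_i^{1+j}(K_i − K_{i+1}). If B(0) = 0 and B'(0) ≠ 0, then for every constant c the linear function x(z) = (f₀ / B'(0)) z + c is a solution; here B'(0) = Σ_{i=1}^{n−1} a_i (ln a_i)(K_i − K_{i+1}). -/
/-- If B(0) = 0 and B'(0) ≠ 0, then for every c the linear function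
x(z) = (f₀/B'(0)) z + c solves the difference equation
K_n x(z) + Σ a_i (K_i − K_{i+1}) x(z + ln a_i) = f₀, where
B'(0) = Σ a_i (ln a_i)(K_i − K_{i+1}). -/
theorem difference_equation_simple_zero
    (n : ℕ) (hn : 2 ≤ n) (a K : ℕ → ℝ) (f₀ c : ℝ)
    (ha : ∀ i, 1 ≤ i → i ≤ n - 1 → 0 < a i ∧ a i < 1)
    (hB0 : K n + ∑ i ∈ Finset.Icc 1 (n - 1), a i * (K i - K (i + 1)) = 0)
    (hB'0 : (∑ i ∈ Finset.Icc 1 (n - 1),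
        a i * Real.log (a i) * (K i - K (i + 1))) ≠ 0) :
    ∀ z : ℝ,
      K n * ((f₀ / ∑ i ∈ Finset.Icc 1 (n - 1),
          a i * Real.log (a i) * (K i - K (i + 1))) * z + c) +
      ∑ i ∈ Finset.Icc 1 (n - 1), a i * (K i - K (i + 1)) *
        ((f₀ / ∑ i ∈ Finset.Icc 1 (n - 1),
            a i * Real.log (a i) * (K i - K (i + 1))) * (z + Real.log (a i)) + c)
      = f₀ := by
  intro z
  set S := ∑ i ∈ Finset.Icc 1 (n - 1), a i * Real.log (a i) * (K i - K (i + 1)) with hS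
  set m := f₀ / S with hm
  have hsplit : ∑ i ∈ Finset.Icc 1 (n - 1), a i * (K i - K (i + 1)) *
      (m * (z + Real.log (a i)) + c)
      = (∑ i ∈ Finset.Icc 1 (n - 1), a i * (K i - K (i + 1))) * (m * z + c) + m * S := by
    rw [hS, Finset.sum_mul, Finset.mul_sum, ← Finset.sum_add_distrib]
    exact Finset.sum_congr rfl fun i _ => by ring
  rw [hsplit]
  have hsum : (∑ i ∈ Finset.Icc 1 (n - 1), a i * (K i - K (i + 1))) = -K n := by
    linarith
  rw [hsum, hm, div_mul_cancel₀ _ hB'0]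
  ring
end

section
/- With notation as before, let B(j) = K_n + Σ_{i=1}^{n−1} a_i^{1+j}(K_i − K_{i+1}) and suppose B(0) = B'(0) = ⋯ = B^{(k)}(0) = 0, B^{(k+1)}(0) ≠ 0 for some k ≥ 0. Then x(z) = (f₀ / B^{(k+1)}(0)) z^{k+1} is a solution of the difference equation K_n x(z) + Σ_{i=1}^{n−1} a_i (K_i − K_{i+1}) x(z + ln a_i) = f₀, and moreover any polynomial of degree ≤ k may be added to x without changing the left-hand side. -/
/-- If B(0) = B'(0) = ⋯ = B^{(k)}(0) = 0 and B^{(k+1)}(0) ≠ 0, then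
x(z) = (f₀/B^{(k+1)}(0)) z^{k+1} solves the difference equation
K_n x(z) + Σ a_i (K_i − K_{i+1}) x(z + ln a_i) = f₀, and the left-hand side
vanishes on every polynomial of degree ≤ k. -/
theorem difference_equation_multiple_zero
    (n : ℕ) (hn : 2 ≤ n) (a K : ℕ → ℝ) (f₀ : ℝ) (k : ℕ)
    (ha : ∀ i, 1 ≤ i → i ≤ n - 1 → 0 < a i ∧ a i < 1)
    (hB0 : K n + ∑ i ∈ Finset.Icc 1 (n - 1), a i * (K i - K (i + 1)) = 0)
    (hBm : ∀ m : ℕ, 1 ≤ m → m ≤ k →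
      (∑ i ∈ Finset.Icc 1 (n - 1),
        a i * Real.log (a i) ^ m * (K i - K (i + 1))) = 0)
    (hBk1 : (∑ i ∈ Finset.Icc 1 (n - 1),
        a i * Real.log (a i) ^ (k + 1) * (K i - K (i + 1))) ≠ 0) :
    (∀ z : ℝ,
      K n * ((f₀ / ∑ i ∈ Finset.Icc 1 (n - 1),
          a i * Real.log (a i) ^ (k + 1) * (K i - K (i + 1))) * z ^ (k + 1)) +
      ∑ i ∈ Finset.Icc 1 (n - 1), a i * (K i - K (i + 1)) *
        ((f₀ / ∑ i ∈ Finset.Icc 1 (n - 1),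
            a i * Real.log (a i) ^ (k + 1) * (K i - K (i + 1)))
          * (z + Real.log (a i)) ^ (k + 1))
      = f₀) ∧
    (∀ p : Polynomial ℝ, p.degree ≤ (k : ℕ) → ∀ z : ℝ,
      K n * p.eval z +
      ∑ i ∈ Finset.Icc 1 (n - 1), a i * (K i - K (i + 1)) *
        p.eval (z + Real.log (a i)) = 0) := by
  set L : ℕ → ℝ := fun i => Real.log (a i) with hL
  set D : ℕ → ℝ := fun i => K i - K (i + 1) with hD
  set S : ℕ → ℝ := fun m => ∑ i ∈ Finset.Icc 1 (n - 1), a i * L i ^ m * D i with hS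
  have hS0 : S 0 = -K n := by
    simp only [hS, pow_zero, mul_one]
    linarith [hB0]
  have hSm : ∀ m, 1 ≤ m → m ≤ k → S m = 0 := fun m h1 h2 => hBm m h1 h2
  have hkey : ∀ (j : ℕ) (z : ℝ),
      ∑ i ∈ Finset.Icc 1 (n - 1), a i * D i * (z + L i) ^ j
        = ∑ m ∈ Finset.range (j + 1), z ^ m * (j.choose m : ℝ) * S (j - m) := by
    intro j z
    have h1 : ∀ i ∈ Finset.Icc 1 (n - 1),
        a i * D i * (z + L i) ^ j
          = ∑ m ∈ Finset.range (j + 1),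
              z ^ m * (j.choose m : ℝ) * (a i * L i ^ (j - m) * D i) := by
      intro i _
      rw [add_pow, Finset.mul_sum]
      refine Finset.sum_congr rfl fun m _ => by push_cast; ring
    rw [Finset.sum_congr rfl h1, Finset.sum_comm]
    refine Finset.sum_congr rfl fun m _ => ?_
    simp only [hS]
    rw [Finset.mul_sum]
  -- sum over monomials of degree ≤ k
  have hmono : ∀ (j : ℕ), j ≤ k → ∀ z : ℝ,
      ∑ i ∈ Finset.Icc 1 (n - 1), a i * D i * (z + L i) ^ j = -K n * z ^ j := by
    intro j hj z
    rw [hkey, Finset.sum_range_succ]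
    have hz : ∀ m ∈ Finset.range j, z ^ m * (j.choose m : ℝ) * S (j - m) = 0 := by
      intro m hm
      rw [Finset.mem_range] at hm
      rw [hSm (j - m) (by omega) (by omega)]
      ring
    rw [Finset.sum_eq_zero hz]
    simp [hS0]
    ring
  -- sum for j = k + 1
  have hk1 : ∀ z : ℝ,
      ∑ i ∈ Finset.Icc 1 (n - 1), a i * D i * (z + L i) ^ (k + 1)
        = -K n * z ^ (k + 1) + S (k + 1) := by
    intro z
    rw [hkey, Finset.sum_range_succ', Finset.sum_range_succ]
    have hz : ∀ m ∈ Finset.range k,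
        z ^ (m + 1) * ((k + 1).choose (m + 1) : ℝ) * S (k + 1 - (m + 1)) = 0 := by
      intro m hm
      rw [Finset.mem_range] at hm
      rw [hSm (k + 1 - (m + 1)) (by omega) (by omega)]
      ring
    rw [Finset.sum_eq_zero hz]
    simp [hS0]
    ring
  constructor
  · intro z
    set C : ℝ := f₀ / S (k + 1) with hC
    have : ∑ i ∈ Finset.Icc 1 (n - 1), a i * D i * (C * (z + L i) ^ (k + 1))
        = C * (-K n * z ^ (k + 1) + S (k + 1)) := by
      rw [← hk1 z, Finset.mul_sum]
      exact Finset.sum_congr rfl fun i _ => by ring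
    calc K n * (C * z ^ (k + 1)) +
          ∑ i ∈ Finset.Icc 1 (n - 1), a i * D i * (C * (z + L i) ^ (k + 1))
        = C * S (k + 1) := by rw [this]; ring
      _ = f₀ := by rw [hC]; field_simp [show S (k + 1) ≠ 0 from hBk1]
  · intro p hp z
    have hdeg : p.natDegree < k + 1 := by
      rcases eq_or_ne p 0 with rfl | hp0
      · simp
      · have := Polynomial.natDegree_le_iff_degree_le.mpr hp
        omega
    have hev : ∀ x : ℝ, p.eval x = ∑ j ∈ Finset.range (k + 1), p.coeff j * x ^ j :=
      fun x => Polynomial.eval_eq_sum_range' hdeg x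
    simp only [hev]
    have h2 : ∀ i ∈ Finset.Icc 1 (n - 1),
        a i * D i * ∑ j ∈ Finset.range (k + 1), p.coeff j * (z + L i) ^ j
          = ∑ j ∈ Finset.range (k + 1), p.coeff j * (a i * D i * (z + L i) ^ j) := by
      intro i _
      rw [Finset.mul_sum]
      exact Finset.sum_congr rfl fun j _ => by ring
    rw [Finset.sum_congr rfl h2, Finset.sum_comm, Finset.mul_sum]
    rw [← Finset.sum_add_distrib]
    refine Finset.sum_eq_zero fun j hj => ?_
    rw [Finset.mem_range] at hj
    rw [← Finset.mul_sum, hmono j (by omega) z]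
    ring
end
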